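/- arXiv:1901.10682 — 2 statements merged into one kernel-verified Lean document; each statement's English description precedes it below -/
import Mathlib

section
/- In the Euclidean case (ω(x) = ‖x‖²/2, so D(u,z) = ‖u−z‖²/2, α = 1) on U = ℝ^d: if x = z − γξ and z₊ = z − γζ, then for every u ∈ ℝ^d, γ⟨ζ, x−u⟩ ≤ (1/2)‖u−z‖² − (1/2)‖u−z₊‖² + γ²‖ξ−ζ‖² − (1/2)(‖x−z‖² + ‖x−z₊‖²). -/
theorem euclidean_extragradient_lemma {d : ℕ}
    (γ : ℝ) (hγ : 0 < γ)
    (z x zplus ξ ζ : EuclideanSpace ℝ (Fin d))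
    (hx : x = z - γ • ξ) (hzplus : zplus = z - γ • ζ) :
    ∀ u : EuclideanSpace ℝ (Fin d),
      γ * @inner ℝ _ _ ζ (x - u) ≤
        (1 / 2) * ‖u - z‖ ^ 2 - (1 / 2) * ‖u - zplus‖ ^ 2
          + γ ^ 2 * ‖ξ - ζ‖ ^ 2
          - (1 / 2) * (‖x - z‖ ^ 2 + ‖x - zplus‖ ^ 2) := by
  intro u
  subst hx hzplus
  apply le_of_eq
  simp only [← @real_inner_self_eq_norm_sq, inner_sub_left, inner_sub_right,
    inner_smul_left, inner_smul_right, RCLike.ofReal_real_eq_id, id_eq, conj_trivial]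
  rw [real_inner_comm ζ u, real_inner_comm z u, real_inner_comm u ζ, real_inner_comm z ζ, real_inner_comm ξ ζ]
  ring
end

section
/- Let f : ℝ^d → ℝ be differentiable with L-Lipschitz gradient and bounded below, attaining its infimum at x*. Consider the GDE iteration: z₀ = x₀, g₀ = ∇f(x₀), and for t ≥ 1: x_t = z_{t−1} − η g_{t−1}, g_t = ∇f(x_t), z_t = z_{t−1} − η g_t, where 0 < η ≤ 1/(12L). Then (1/T) Σ_{t=1}^T ‖∇f(x_t)‖² ≤ 8(f(x₀) − f(x*))/(ηT) − (1/(η²T)) Σ_{t=0}^{T−1} ‖x_{t+1} − x_t‖², and hence min_{1≤t≤T} ‖∇f(x_t)‖² ≤ 8(f(x₀) − f(x*))/(ηT). -/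
open Finset
open scoped RealInnerProductSpace

lemma smooth_descent {F : Type*} [NormedAddCommGroup F] [InnerProductSpace ℝ F]
    [CompleteSpace F]
    (f : F → ℝ) (L : ℝ) (hdiff : Differentiable ℝ f)
    (hlip : ∀ a b, ‖gradient f a - gradient f b‖ ≤ L * ‖a - b‖) (p q : F) :
    f q ≤ f p + ⟪gradient f p, q - p⟫ + L / 2 * ‖q - p‖ ^ 2 := by
  set v := q - p with hv
  have hgrad : ∀ a : F, fderiv ℝ f a = InnerProductSpace.toDual ℝ F (gradient f a) :=
    fun a => ((InnerProductSpace.toDual ℝ F).apply_symm_apply _).symm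
  set φ : ℝ → ℝ := fun t => f (p + t • v) - t * ⟪gradient f p, v⟫ - L/2 * t^2 * ‖v‖^2 with hφ
  have hc : ∀ t : ℝ, HasDerivAt (fun t : ℝ => p + t • v) v t := by
    intro t
    simpa using ((hasDerivAt_id t).smul_const v).const_add p
  have hφ' : ∀ t : ℝ, HasDerivAt φ
      (⟪gradient f (p + t • v), v⟫ - ⟪gradient f p, v⟫ - L/2*(2*t)*‖v‖^2) t := by
    intro t
    have h1 : HasDerivAt (fun t : ℝ => f (p + t • v)) ⟪gradient f (p + t • v), v⟫ t := by
      have := (hdiff (p + t • v)).hasFDerivAt.comp_hasDerivAt t (hc t)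
      rw [hgrad, InnerProductSpace.toDual_apply_apply] at this
      exact this
    have h2 : HasDerivAt (fun t : ℝ => t * ⟪gradient f p, v⟫) ⟪gradient f p, v⟫ t := by
      simpa using (hasDerivAt_id t).mul_const _
    have h3 : HasDerivAt (fun t : ℝ => L/2 * t^2 * ‖v‖^2) (L/2*(2*t)*‖v‖^2) t := by
      have := ((hasDerivAt_pow 2 t).const_mul (L/2)).mul_const (‖v‖^2)
      simpa [mul_assoc, mul_comm, mul_left_comm] using this
    exact (h1.sub h2).sub h3
  have hanti : AntitoneOn φ (Set.Icc 0 1) := by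
    apply antitoneOn_of_deriv_nonpos (convex_Icc 0 1)
    · exact fun t _ => ((hφ' t).differentiableAt).continuousAt.continuousWithinAt
    · exact fun t _ => ((hφ' t).differentiableAt).differentiableWithinAt
    · intro t ht
      rw [interior_Icc] at ht
      rw [(hφ' t).deriv]
      have hcs : ⟪gradient f (p + t • v), v⟫ - ⟪gradient f p, v⟫ ≤ L * t * ‖v‖^2 := by
        have h1 : ⟪gradient f (p + t • v), v⟫ - ⟪gradient f p, v⟫
            = ⟪gradient f (p + t • v) - gradient f p, v⟫ := by
          rw [inner_sub_left]
        have h2 := real_inner_le_norm (gradient f (p + t • v) - gradient f p) v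
        have h3 := hlip (p + t • v) p
        have h4 : ‖(p + t • v) - p‖ = t * ‖v‖ := by
          rw [add_sub_cancel_left, norm_smul, Real.norm_eq_abs, abs_of_pos ht.1]
        rw [h4] at h3
        have h5 : ‖gradient f (p + t • v) - gradient f p‖ * ‖v‖ ≤ L * (t * ‖v‖) * ‖v‖ :=
          mul_le_mul_of_nonneg_right h3 (norm_nonneg v)
        rw [h1]
        calc ⟪gradient f (p + t • v) - gradient f p, v⟫
            ≤ ‖gradient f (p + t • v) - gradient f p‖ * ‖v‖ := h2
          _ ≤ L * (t * ‖v‖) * ‖v‖ := h5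
          _ = L * t * ‖v‖^2 := by ring
      nlinarith [hcs]
  have h01 := hanti (Set.left_mem_Icc.2 zero_le_one) (Set.right_mem_Icc.2 zero_le_one)
    zero_le_one
  have hφ1 : φ 1 = f q - ⟪gradient f p, v⟫ - L/2 * ‖v‖^2 := by
    simp [hφ, hv]
  have hφ0 : φ 0 = f p := by simp [hφ]
  rw [hφ1, hφ0] at h01
  linarith
set_option maxHeartbeats 1000000 in
theorem gde_convergence {d : ℕ}
    (f : EuclideanSpace ℝ (Fin d) → ℝ) (L η : ℝ) (T : ℕ)
    (x z : ℕ → EuclideanSpace ℝ (Fin d)) (xstar : EuclideanSpace ℝ (Fin d))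
    (hdiff : Differentiable ℝ f) (hL : 0 < L)
    (hlip : ∀ a b, ‖gradient f a - gradient f b‖ ≤ L * ‖a - b‖)
    (hmin : ∀ y, f xstar ≤ f y)
    (hη : 0 < η) (hηL : η ≤ 1 / (12 * L))
    (hz0 : z 0 = x 0) (hx1 : x 1 = x 0)
    (hxup : ∀ t : ℕ, 1 ≤ t → x (t + 1) = z t - η • gradient f (x t))
    (hzup : ∀ t : ℕ, 1 ≤ t → z t = z (t - 1) - η • gradient f (x t))
    (hT : 1 ≤ T) :
    (1 / (T : ℝ)) * ∑ t ∈ Finset.Icc 1 T, ‖gradient f (x t)‖ ^ 2 ≤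
        8 * (f (x 0) - f xstar) / (η * T)
          - (1 / (η ^ 2 * T)) * ∑ t ∈ Finset.range T, ‖x (t + 1) - x t‖ ^ 2 ∧
    ∃ t ∈ Finset.Icc 1 T,
      ‖gradient f (x t)‖ ^ 2 ≤ 8 * (f (x 0) - f xstar) / (η * T) := by
  have hL12 : 12 * L * η ≤ 1 := by
    rw [le_div_iff₀ (by positivity)] at hηL
    linarith
  -- the one-step inequality
  have hstep : ∀ t : ℕ, 1 ≤ t →
      8*η*f (x (t+1)) + 8*η^2*‖gradient f (x t)‖^2 + ‖x (t+1) - x t‖^2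
        ≤ 8*η*f (x t) +
          2*η^2*‖(if t = 1 then (0:EuclideanSpace ℝ (Fin d)) else gradient f (x (t-1)))‖^2 := by
    intro t ht
    set b : EuclideanSpace ℝ (Fin d) :=
      if t = 1 then (0:EuclideanSpace ℝ (Fin d)) else gradient f (x (t-1)) with hb
    set g : EuclideanSpace ℝ (Fin d) := gradient f (x t) with hg
    have hD : x (t+1) - x t = η • b - (2*η) • g := by
      rcases eq_or_lt_of_le ht with h1 | h2
      · subst h1
        have e1 := hxup 1 le_rfl
        have e2 : z 1 = z 0 - η • gradient f (x 1) := hzup 1 le_rfl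
        have hbe : b = 0 := by rw [hb, if_pos rfl]
        rw [e1, e2, hz0, ← hx1, hbe, hg]
        module
      · obtain ⟨s, rfl⟩ : ∃ s, t = s + 2 := ⟨t - 2, by omega⟩
        have e1 := hxup (s+2) (by omega)
        have e2 := hzup (s+2) (by omega)
        have e3 : x (s+2) = z (s+1) - η • gradient f (x (s+1)) := hxup (s+1) (by omega)
        have hs1 : s + 2 - 1 = s + 1 := by omega
        rw [hs1] at e2
        have hbe : b = gradient f (x (s+1)) := by
          rw [hb, if_neg (by omega), hs1]
        have e3' : z (s+1) = x (s+2) + η • gradient f (x (s+1)) := by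
          rw [e3]; abel
        rw [e1, e2, e3', hbe, hg]
        module
    have hs := smooth_descent f L hdiff hlip (x t) (x (t+1))
    have hip : ⟪g, x (t+1) - x t⟫ = η * ⟪g, b⟫ - 2*η*‖g‖^2 := by
      rw [hD, inner_sub_right, real_inner_smul_right, real_inner_smul_right,
        real_inner_self_eq_norm_sq]
      try ring
    have hnorm : ‖x (t+1) - x t‖^2
        = η^2*‖b‖^2 - 4*η^2*⟪g, b⟫ + 4*η^2*‖g‖^2 := by
      rw [hD, norm_sub_sq_real, real_inner_smul_left, real_inner_smul_right,
        norm_smul, norm_smul, real_inner_comm b g]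
      simp only [Real.norm_eq_abs, mul_pow, sq_abs]
      ring
    have hSnn : 0 ≤ ‖b‖^2 - 4*⟪g, b⟫ + 4*‖g‖^2 := by
      have h0 : 0 ≤ ‖x (t+1) - x t‖^2 := sq_nonneg _
      rw [hnorm] at h0
      nlinarith [h0, pow_pos hη 2]
    have hprod : 0 ≤ (1 - 4*η*L) * (η^2 * (‖b‖^2 - 4*⟪g, b⟫ + 4*‖g‖^2)) := by
      apply mul_nonneg
      · nlinarith [mul_pos hL hη]
      · exact mul_nonneg (sq_nonneg η) hSnn
    rw [← hg, hip, hnorm] at hs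
    rw [hnorm]
    nlinarith [mul_le_mul_of_nonneg_left hs (by positivity : (0:ℝ) ≤ 8*η), hprod]
  -- telescoping
  have key : ∀ n : ℕ, 1 ≤ n →
      8*η*f (x (n+1)) + 6*η^2*(∑ t ∈ Finset.Icc 1 n, ‖gradient f (x t)‖^2)
        + 2*η^2*‖gradient f (x n)‖^2
        + (∑ t ∈ Finset.Icc 1 n, ‖x (t+1) - x t‖^2) ≤ 8*η*f (x 1) := by
    intro n hn
    induction n, hn using Nat.le_induction with
    | base =>
      have h := hstep 1 le_rfl
      rw [if_pos rfl] at h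
      simp only [norm_zero] at h
      simp only [Finset.Icc_self, Finset.sum_singleton]
      nlinarith [h]
    | succ n hn ih =>
      have h := hstep (n+1) (by omega)
      have hbeq : (if n+1 = 1 then (0:EuclideanSpace ℝ (Fin d)) else gradient f (x (n+1-1)))
          = gradient f (x n) := by
        rw [if_neg (by omega)]
        simp
      rw [hbeq] at h
      rw [Finset.sum_Icc_succ_top (by omega : 1 ≤ n+1),
        Finset.sum_Icc_succ_top (by omega : 1 ≤ n+1)]
      linarith
  have hkeyT := key T hT
  rw [hx1] at hkeyT
  have hfmin := hmin (x (T+1))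
  have hSg0 : 0 ≤ ∑ t ∈ Finset.Icc 1 T, ‖gradient f (x t)‖^2 :=
    Finset.sum_nonneg fun i _ => sq_nonneg _
  have hSd0 : 0 ≤ ∑ t ∈ Finset.Icc 1 T, ‖x (t+1) - x t‖^2 :=
    Finset.sum_nonneg fun i _ => sq_nonneg _
  have hmain : 6*η^2*(∑ t ∈ Finset.Icc 1 T, ‖gradient f (x t)‖^2)
      + (∑ t ∈ Finset.Icc 1 T, ‖x (t+1) - x t‖^2)
      ≤ 8*η*(f (x 0) - f xstar) := by
    nlinarith [hkeyT, mul_le_mul_of_nonneg_left hfmin (by positivity : (0:ℝ) ≤ 8*η),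
      mul_nonneg (mul_nonneg (by norm_num : (0:ℝ) ≤ 2) (sq_nonneg η))
        (sq_nonneg ‖gradient f (x T)‖)]
  have hSd' : (∑ t ∈ Finset.range T, ‖x (t+1) - x t‖^2)
      ≤ ∑ t ∈ Finset.Icc 1 T, ‖x (t+1) - x t‖^2 := by
    rw [Finset.range_eq_Ico, Finset.sum_eq_sum_Ico_succ_bot (by omega : 0 < T)]
    have h0 : ‖x (0+1) - x 0‖^2 = 0 := by simp [hx1]
    rw [h0, zero_add]
    apply Finset.sum_le_sum_of_subset_of_nonneg
    · intro i hi
      simp only [Finset.mem_Ico, Finset.mem_Icc] at *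
      omega
    · intros
      positivity
  have hTpos : (0:ℝ) < T := by
    have : (1:ℝ) ≤ T := by exact_mod_cast hT
    linarith
  have hSd'0 : 0 ≤ ∑ t ∈ Finset.range T, ‖x (t+1) - x t‖^2 :=
    Finset.sum_nonneg fun i _ => sq_nonneg _
  constructor
  · have h2 : (∑ t ∈ Finset.Icc 1 T, ‖gradient f (x t)‖^2)
        ≤ (8*(f (x 0) - f xstar)*η - (∑ t ∈ Finset.range T, ‖x (t+1) - x t‖^2))/η^2 := by
      rw [le_div_iff₀ (by positivity)]
      nlinarith [hmain, hSd', mul_nonneg (sq_nonneg η) hSg0]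
    calc (1/(T:ℝ)) * ∑ t ∈ Finset.Icc 1 T, ‖gradient f (x t)‖^2
        = (∑ t ∈ Finset.Icc 1 T, ‖gradient f (x t)‖^2) / T := by ring
      _ ≤ ((8*(f (x 0) - f xstar)*η - (∑ t ∈ Finset.range T, ‖x (t+1) - x t‖^2))/η^2) / T := by
          gcongr
      _ = 8*(f (x 0) - f xstar)/(η*T)
            - (1/(η^2*T))*(∑ t ∈ Finset.range T, ‖x (t+1) - x t‖^2) := by
          field_simp
  · apply Finset.exists_le_of_sum_le ⟨1, by simp [Finset.mem_Icc]; omega⟩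
    have hcard : (Finset.Icc 1 T).card = T := by
      rw [Nat.card_Icc]
      omega
    rw [Finset.sum_const, hcard, nsmul_eq_mul]
    have heq : (T:ℝ) * (8*(f (x 0) - f xstar)/(η*T)) = 8*(f (x 0) - f xstar)/η := by
      field_simp
    rw [heq, le_div_iff₀ hη]
    nlinarith [hmain, hSd0, mul_nonneg (sq_nonneg η) hSg0]
end
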